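/- Let V be a real topological vector space, let q : V → ℝ be a continuous weak Minkowski norm, and let f : V → ℝ be positively homogeneous and nonexpansive with respect to q. Fix y ∈ V and define g_y : V → ℝ by g_y(x) = inf_{λ > 0} ( λ f(y) + q(x − λy) ). Then g_y is convex, positively homogeneous, continuous, bounded below by f and above by q, and for every x ∈ V, g_y(x) = max_{p ∈ P_y} ⟨p,x⟩, where P_y := { p ∈ V' | ⟨p,z⟩ ≤ q(z) for all z ∈ V, and ⟨p,y⟩ ≤ f(y) }, the maximum being attained. -/

import Mathlib

lemma cont_of_nonexp {V : Type*} [AddCommGroup V] [TopologicalSpace V]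
    [IsTopologicalAddGroup V] (q h : V → ℝ) (hq : Continuous q) (hq0 : q 0 = 0)
    (hne : ∀ a b : V, h a - h b ≤ q (a - b)) : Continuous h := by
  rw [continuous_iff_continuousAt]
  intro x₀
  have hl : Filter.Tendsto (fun x => h x₀ - q (x₀ - x)) (nhds x₀) (nhds (h x₀)) := by
    have : Continuous fun x => h x₀ - q (x₀ - x) :=
      continuous_const.sub (hq.comp (continuous_const.sub continuous_id))
    have := this.tendsto x₀
    simpa [hq0] using this
  have hu : Filter.Tendsto (fun x => h x₀ + q (x - x₀)) (nhds x₀) (nhds (h x₀)) := by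
    have : Continuous fun x => h x₀ + q (x - x₀) :=
      continuous_const.add (hq.comp (continuous_id.sub continuous_const))
    have := this.tendsto x₀
    simpa [hq0] using this
  exact tendsto_of_tendsto_of_tendsto_of_le_of_le hl hu
    (fun x => by linarith [hne x₀ x]) (fun x => by linarith [hne x x₀])

/-- Let `f : V → ℝ` be positively homogeneous and nonexpansive with respect to
a continuous weak Minkowski norm `q`. Fix `y ∈ V` and define
`g_y x = inf_{λ > 0} (λ f y + q (x - λ • y))`. Then `g_y` is convex, positively homogeneous,
continuous, bounded below by `f` and above by `q`, and for every `x`,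
`g_y x = max_{p ∈ P_y} p x`, the maximum being attained, where
`P_y = {p ∈ V' | p ≤ q and p y ≤ f y}`. -/
theorem stmt12 {V : Type*} [AddCommGroup V] [Module ℝ V] [TopologicalSpace V]
    [IsTopologicalAddGroup V] [ContinuousSMul ℝ V]
    (q : V → ℝ) (hq_convex : ConvexOn ℝ Set.univ q)
    (hq_hom : ∀ (c : ℝ), 0 ≤ c → ∀ x : V, q (c • x) = c * q x)
    (hq_cont : Continuous q) (f : V → ℝ)
    (hf_hom : ∀ (c : ℝ), 0 ≤ c → ∀ x : V, f (c • x) = c * f x)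
    (hf_ne : ∀ x y : V, f x - f y ≤ q (x - y)) (y : V)
    (g : V → ℝ)
    (hg : g = fun x : V => sInf {r : ℝ | ∃ l : ℝ, 0 < l ∧ r = l * f y + q (x - l • y)}) :
    ConvexOn ℝ Set.univ g ∧
    (∀ (c : ℝ), 0 ≤ c → ∀ x : V, g (c • x) = c * g x) ∧
    Continuous g ∧
    (∀ x : V, f x ≤ g x) ∧
    (∀ x : V, g x ≤ q x) ∧
    (∀ x : V, IsGreatest {s : ℝ | ∃ p : V →L[ℝ] ℝ,
      ((∀ z : V, p z ≤ q z) ∧ p y ≤ f y) ∧ s = p x} (g x)) := by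
  set S : V → Set ℝ := fun x => {r : ℝ | ∃ l : ℝ, 0 < l ∧ r = l * f y + q (x - l • y)} with hS
  have hgS : ∀ x, g x = sInf (S x) := fun x => by rw [hg]
  have hf0 : f 0 = 0 := by
    have := hf_hom 0 le_rfl 0; simpa using this
  have hq0 : q 0 = 0 := by
    have := hq_hom 0 le_rfl 0; simpa using this
  -- q subadditive
  have q_add : ∀ a b : V, q (a + b) ≤ q a + q b := by
    intro a b
    have h2 : q (a + b) = 2 * q ((2:ℝ)⁻¹ • (a + b)) := by
      rw [hq_hom _ (by norm_num)]; ring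
    have hc := hq_convex.2 (Set.mem_univ a) (Set.mem_univ b)
      (by norm_num : (0:ℝ) ≤ 1/2) (by norm_num : (0:ℝ) ≤ 1/2) (by norm_num)
    have he : (2:ℝ)⁻¹ • (a + b) = (1/2 : ℝ) • a + (1/2 : ℝ) • b := by
      rw [smul_add]; norm_num
    simp only [smul_eq_mul] at hc
    rw [h2, he]; linarith [hc]
  -- membership
  have hmem : ∀ (x : V) (l : ℝ), 0 < l → l * f y + q (x - l • y) ∈ S x :=
    fun x l hl => ⟨l, hl, rfl⟩
  have hne : ∀ x, (S x).Nonempty := fun x => ⟨_, hmem x 1 one_pos⟩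
  -- lower bound by f
  have hlb : ∀ x, ∀ r ∈ S x, f x ≤ r := by
    rintro x r ⟨l, hl, rfl⟩
    have := hf_ne x (l • y)
    rw [hf_hom l hl.le] at this
    linarith
  have hbdd : ∀ x, BddBelow (S x) := fun x => ⟨f x, hlb x⟩
  have f_le_g : ∀ x, f x ≤ g x := fun x => by
    rw [hgS]; exact le_csInf (hne x) (hlb x)
  have g_le : ∀ (x : V) (l : ℝ), 0 < l → g x ≤ l * f y + q (x - l • y) :=
    fun x l hl => by rw [hgS]; exact csInf_le (hbdd x) (hmem x l hl)
  -- g ≤ q via limit l → 0⁺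
  have g_le_q : ∀ x, g x ≤ q x := by
    intro x
    have ht : Filter.Tendsto (fun l : ℝ => l * f y + q (x - l • y))
        (nhdsWithin 0 (Set.Ioi 0)) (nhds (q x)) := by
      have hc : Continuous fun l : ℝ => l * f y + q (x - l • y) := by
        continuity
      have := (hc.tendsto 0).mono_left (nhdsWithin_le_nhds (s := Set.Ioi (0:ℝ)))
      simpa using this
    refine ge_of_tendsto ht ?_
    filter_upwards [self_mem_nhdsWithin] with l hl
    exact g_le x l hl
  -- g nonexpansive wrt q
  have g_ne : ∀ a b : V, g a - g b ≤ q (a - b) := by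
    intro a b
    have h1 : ∀ r ∈ S b, g a - q (a - b) ≤ r := by
      rintro r ⟨l, hl, rfl⟩
      have h2 : g a ≤ l * f y + q (a - l • y) := g_le a l hl
      have h3 : q (a - l • y) ≤ q (b - l • y) + q (a - b) := by
        have := q_add (b - l • y) (a - b)
        have he : b - l • y + (a - b) = a - l • y := by abel
        rw [he] at this; linarith
      linarith
    have := le_csInf (hne b) h1
    rw [hgS b]; linarith
  -- g 0 = 0
  have g0 : g 0 = 0 := by
    have h1 : (0:ℝ) ≤ g 0 := by
      have := f_le_g 0; rw [hf0] at this; exact this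
    have h2 : g 0 ≤ 0 := by have := g_le_q 0; rwa [hq0] at this
    linarith
  -- g subadditive
  have g_add : ∀ a b : V, g (a + b) ≤ g a + g b := by
    intro a b
    have key : ∀ r₁ ∈ S a, ∀ r₂ ∈ S b, g (a + b) ≤ r₁ + r₂ := by
      rintro r₁ ⟨l₁, hl₁, rfl⟩ r₂ ⟨l₂, hl₂, rfl⟩
      have hl : 0 < l₁ + l₂ := by linarith
      have h2 : g (a + b) ≤ (l₁ + l₂) * f y + q (a + b - (l₁ + l₂) • y) :=
        g_le _ _ hl
      have h3 : q (a + b - (l₁ + l₂) • y) ≤ q (a - l₁ • y) + q (b - l₂ • y) := by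
        have := q_add (a - l₁ • y) (b - l₂ • y)
        have he : a - l₁ • y + (b - l₂ • y) = a + b - (l₁ + l₂) • y := by
          rw [add_smul]; abel
        rw [he] at this; exact this
      nlinarith
    have h1 : ∀ r₂ ∈ S b, g (a + b) - r₂ ≤ g a := by
      intro r₂ hr₂
      rw [hgS a]
      exact le_csInf (hne a) fun r₁ hr₁ => by linarith [key r₁ hr₁ r₂ hr₂]
    have h2 : g (a + b) - g a ≤ g b := by
      rw [hgS b]
      exact le_csInf (hne b) fun r₂ hr₂ => by linarith [h1 r₂ hr₂]
    linarith
  -- g positively homogeneous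
  have g_hom_pos : ∀ c : ℝ, 0 < c → ∀ x : V, g (c • x) ≤ c * g x := by
    intro c hc x
    have h1 : ∀ r ∈ S x, g (c • x) / c ≤ r := by
      rintro r ⟨l, hl, rfl⟩
      have h2 : g (c • x) ≤ (c * l) * f y + q (c • x - (c * l) • y) :=
        g_le _ _ (by positivity)
      have h3 : q (c • x - (c * l) • y) = c * q (x - l • y) := by
        rw [← hq_hom c hc.le]; congr 1
        rw [smul_sub, smul_smul]
      rw [h3] at h2
      rw [div_le_iff₀ hc]
      calc g (c • x) ≤ c * l * f y + c * q (x - l • y) := h2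
        _ = (l * f y + q (x - l • y)) * c := by ring
    have := le_csInf (hne x) h1
    rw [← hgS x] at this
    calc g (c • x) = (g (c • x) / c) * c := by field_simp
      _ ≤ g x * c := by nlinarith
      _ = c * g x := by ring
  have g_hom : ∀ c : ℝ, 0 ≤ c → ∀ x : V, g (c • x) = c * g x := by
    intro c hc x
    rcases eq_or_lt_of_le hc with h | h
    · rw [← h, zero_smul, g0]; ring
    · refine le_antisymm (g_hom_pos c h x) ?_
      have := g_hom_pos c⁻¹ (by positivity) (c • x)
      rw [smul_smul, inv_mul_cancel₀ h.ne', one_smul] at this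
      calc c * g x ≤ c * (c⁻¹ * g (c • x)) := by nlinarith
        _ = g (c • x) := by field_simp
  -- convexity
  have g_convex : ConvexOn ℝ Set.univ g := by
    refine ⟨convex_univ, fun a _ b _ ta tb hta htb hsum => ?_⟩
    calc g (ta • a + tb • b) ≤ g (ta • a) + g (tb • b) := g_add _ _
      _ = ta * g a + tb * g b := by rw [g_hom ta hta, g_hom tb htb]
      _ = ta • g a + tb • g b := rfl
  have g_cont : Continuous g := cont_of_nonexp q g hq_cont hq0 g_ne
  have g_le_fy : g y ≤ f y := by
    have := g_le y 1 one_pos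
    simpa [hq0] using this
  refine ⟨g_convex, g_hom, g_cont, f_le_g, g_le_q, fun x => ?_⟩
  constructor
  · -- existence via Hahn-Banach
    have H : ∀ c : ℝ, c • x = 0 → c • g x = (0:ℝ) := by
      intro c hc
      rcases eq_or_ne c 0 with h | h
      · rw [h, zero_smul]
      · have hx0 : x = 0 := by
          have := congrArg (fun v => c⁻¹ • v) hc
          simpa [smul_smul, inv_mul_cancel₀ h] using this
        rw [hx0, g0, smul_zero]
    set F : V →ₗ.[ℝ] ℝ := LinearPMap.mkSpanSingleton' x (g x) H with hF
    have hdom : ∀ z : F.domain, F z ≤ g z := by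
      rintro ⟨z, hz⟩
      obtain ⟨c, rfl⟩ := Submodule.mem_span_singleton.1 hz
      rw [LinearPMap.mkSpanSingleton'_apply]
      rcases le_or_gt 0 c with h | h
      · rw [g_hom c h x]; exact le_of_eq rfl
      · have h1 : g (c • x) + g ((-c) • x) ≥ 0 := by
          have := g_add (c • x) ((-c) • x)
          have he : c • x + (-c) • x = 0 := by
            rw [← add_smul]; simp
          rw [he, g0] at this; linarith
        have h2 : g ((-c) • x) = -c * g x := g_hom (-c) (by linarith) x
        have : c • g x = c * g x := rfl
        show c * g x ≤ g (c • x); linarith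
    obtain ⟨p, hp_eq, hp_le⟩ := exists_extension_of_le_sublinear F g
      (fun c hc x => g_hom c hc.le x) g_add hdom
    have hp_q : ∀ z, p z ≤ q z := fun z => (hp_le z).trans (g_le_q z)
    have hp_y : p y ≤ f y := (hp_le y).trans g_le_fy
    have hp_ne : ∀ a b : V, p a - p b ≤ q (a - b) := by
      intro a b
      have : p a - p b = p (a - b) := by rw [map_sub]
      rw [this]
      exact hp_q _
    have hp_cont : Continuous p := cont_of_nonexp q p hq_cont hq0 hp_ne
    refine ⟨⟨p, hp_cont⟩, ⟨hp_q, hp_y⟩, ?_⟩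
    have hx_mem : x ∈ F.domain := Submodule.mem_span_singleton_self x
    have := hp_eq ⟨x, hx_mem⟩
    rw [LinearPMap.mkSpanSingleton'_apply_self] at this
    simpa using this.symm
  · -- upper bound
    rintro s ⟨p, ⟨hp_q, hp_y⟩, rfl⟩
    rw [hgS]
    refine le_csInf (hne x) ?_
    rintro r ⟨l, hl, rfl⟩
    have h1 : p x = p (x - l • y) + l * p y := by
      rw [map_sub, map_smul]; simp only [smul_eq_mul]; ring
    have h2 : p (x - l • y) ≤ q (x - l • y) := hp_q _
    nlinarith [hp_y]
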